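/- Fix i ∈ ℕ and assume 𝒳̂^i(0) = γ·Id, where 𝒳̂^i(λ) = ∏_{j=i}^{N+i−1} B̂^j(λ). Let (â_k : k ≥ 0) be positive reals with â_k → ∞, and set Ĉ^i_k(λ) = â_k·(𝒳̂^i(λ/â_k) − γ·Id). Define the matrix-valued function 𝒞̂^i(λ) = λ·[[ −(α_{i−1}/α_i)·(w_{N−2}^{[i+1]})′(0), (w_{N−1}^{[i]})′(0) ], [ −(α_{i−1}/α_i)·(w_{N−1}^{[i+1]})′(0), (w_N^{[i]})′(0) ]]. Then for every compact set K ⊂ ℂ: (1) Ĉ^i_k → 𝒞̂^i uniformly on K as k → ∞; (2) there exists a constant c > 0 such that sup_{λ∈K} ‖Ĉ^i_{k+1}(λ) − Ĉ^i_k(λ)‖ ≤ c·|1/â_{k+1} − 1/â_k| for all k ≥ 0, where ‖·‖ is the operator norm on 2×2 complex matrices. -/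

import Mathlib

open scoped Matrix.Norms.L2Operator

/-- The product `C (n₀ + len - 1) * ⋯ * C n₀` of complex matrices, with larger indices on the
left; equal to the identity when `len = 0`. -/
noncomputable def prodDescC (C : ℤ → Matrix (Fin 2) (Fin 2) ℂ) (n₀ : ℤ) : ℕ → Matrix (Fin 2) (Fin 2) ℂ
  | 0 => 1
  | len + 1 => C (n₀ + len) * prodDescC C n₀ len

/-- The complex transfer matrix `B̂^j(λ)` associated with the sequences `α`, `β`. -/
noncomputable def transferMatrixC (α β : ℤ → ℝ) (j : ℤ) (z : ℂ) : Matrix (Fin 2) (Fin 2) ℂ :=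
  !![0, 1; (-(α (j - 1) / α j) : ℝ), (z - (β j : ℂ)) / (α j : ℂ)]

section helpers

-- norm lemmas (already tested)
lemma euclid_coord_le (x : EuclideanSpace ℂ (Fin 2)) (b : Fin 2) : ‖x b‖ ≤ ‖x‖ := by
  rw [EuclideanSpace.norm_eq]
  have : ‖x b‖ = Real.sqrt (‖x b‖ ^ 2) := by rw [Real.sqrt_sq (norm_nonneg _)]
  rw [this]
  apply Real.sqrt_le_sqrt
  exact Finset.single_le_sum (f := fun i => ‖x i‖ ^ 2) (fun i _ => by positivity) (Finset.mem_univ b)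

lemma euclid_norm_le_sum (x : EuclideanSpace ℂ (Fin 2)) : ‖x‖ ≤ ∑ a, ‖x a‖ := by
  rw [EuclideanSpace.norm_eq]
  have h1 : ∑ a, ‖x a‖ ^ 2 ≤ (∑ a, ‖x a‖) ^ 2 := by
    rw [Fin.sum_univ_two, Fin.sum_univ_two]
    nlinarith [norm_nonneg (x 0), norm_nonneg (x 1), mul_nonneg (norm_nonneg (x 0)) (norm_nonneg (x 1))]
  calc Real.sqrt (∑ a, ‖x a‖ ^ 2) ≤ Real.sqrt ((∑ a, ‖x a‖) ^ 2) := Real.sqrt_le_sqrt h1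
    _ = ∑ a, ‖x a‖ := Real.sqrt_sq (by positivity)

set_option maxHeartbeats 400000 in
lemma matrix_norm_le_sum (A : Matrix (Fin 2) (Fin 2) ℂ) : ‖A‖ ≤ ∑ a, ∑ b, ‖A a b‖ := by
  rw [Matrix.l2_opNorm_def]
  apply ContinuousLinearMap.opNorm_le_bound _ (Finset.sum_nonneg fun a _ => Finset.sum_nonneg fun b _ => norm_nonneg _)
  intro x
  set y : EuclideanSpace ℂ (Fin 2) := (Matrix.toEuclideanLin.trans LinearMap.toContinuousLinearMap A) x with hy
  have happ : ∀ a : Fin 2, y a = ∑ b, A a b * x b := fun a => by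
    show (Matrix.toEuclideanLin A x) a = _
    rw [Matrix.toEuclideanLin_apply]
    rfl
  have h2 : ‖y‖ ≤ ∑ a, ‖y a‖ := euclid_norm_le_sum y
  refine h2.trans ?_
  have h3 : ∀ a : Fin 2, ‖y a‖ ≤ ∑ b, ‖A a b‖ * ‖x‖ := by
    intro a
    rw [happ a]
    refine (norm_sum_le _ _).trans (Finset.sum_le_sum fun b _ => ?_)
    rw [norm_mul]
    exact mul_le_mul_of_nonneg_left (euclid_coord_le x b) (norm_nonneg _)
  refine (Finset.sum_le_sum fun a _ => h3 a).trans ?_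
  rw [Finset.sum_mul]
  exact le_of_eq (Finset.sum_congr rfl fun a _ => (Finset.sum_mul _ _ _).symm)

-- polynomial family
open Polynomial in
noncomputable def Ppoly (α β : ℤ → ℝ) (k : ℕ) : ℕ → Polynomial ℝ
  | 0 => 1
  | 1 => C (α (k : ℤ))⁻¹ * (X - C (β (k : ℤ)))
  | n + 2 => C (α ((n + 1 + k : ℕ) : ℤ))⁻¹ *
      ((X - C (β ((n + 1 + k : ℕ) : ℤ))) * Ppoly α β k (n + 1)
        - C (α ((n + k : ℕ) : ℤ)) * Ppoly α β k n)

lemma W_eq (α β : ℤ → ℝ) (hαpos : ∀ j, 0 < α j) (W : ℕ → ℕ → ℝ → ℝ)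
    (hW0 : ∀ (k : ℕ) (x : ℝ), W k 0 x = 1)
    (hW1 : ∀ (k : ℕ) (x : ℝ), W k 1 x = (x - β k) / α k)
    (hWrec : ∀ k : ℕ, ∀ n : ℕ, 1 ≤ n → ∀ x : ℝ,
      α ((n : ℤ) + k - 1) * W k (n - 1) x + β ((n : ℤ) + k) * W k n x
        + α ((n : ℤ) + k) * W k (n + 1) x = x * W k n x)
    (k : ℕ) : ∀ n, W k n = fun x => (Ppoly α β k n).eval x := by
  intro n
  induction n using Nat.strong_induction_on with
  | _ n ih =>
    match n with
    | 0 => funext x; simp [Ppoly, hW0]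
    | 1 =>
      funext x
      simp only [Ppoly, hW1, Polynomial.eval_mul, Polynomial.eval_C, Polynomial.eval_sub,
        Polynomial.eval_X]
      rw [div_eq_inv_mul]
    | n + 2 =>
      funext x
      have h1 := hWrec k (n + 1) (Nat.le_add_left 1 n) x
      have e1 : ((n + 1 : ℕ) : ℤ) + k - 1 = ((n + k : ℕ) : ℤ) := by push_cast; ring
      have e2 : ((n + 1 : ℕ) : ℤ) + k = ((n + 1 + k : ℕ) : ℤ) := by push_cast; ring
      rw [e1, e2] at h1
      simp only [Nat.add_sub_cancel, show n + 1 + 1 = n + 2 from rfl] at h1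
      rw [ih (n + 1) (by omega), ih n (by omega)] at h1
      dsimp only at h1
      have hα := (hαpos ((n + 1 + k : ℕ) : ℤ)).ne'
      show W k (n + 2) x = (Ppoly α β k (n + 2)).eval x
      simp only [Ppoly, Polynomial.eval_mul, Polynomial.eval_C, Polynomial.eval_sub,
        Polynomial.eval_X]
      rw [eq_inv_mul_iff_mul_eq₀ hα]
      linarith [h1]

noncomputable def Qe (α β : ℤ → ℝ) (k n : ℕ) (z : ℂ) : ℂ :=
  ((Ppoly α β k n).map Complex.ofRealHom).eval z

lemma Qe_zero (α β : ℤ → ℝ) (k : ℕ) (z : ℂ) : Qe α β k 0 z = 1 := by simp [Qe, Ppoly]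

lemma Qe_one (α β : ℤ → ℝ) (k : ℕ) (z : ℂ) :
    Qe α β k 1 z = ((α (k : ℤ) : ℝ) : ℂ)⁻¹ * (z - ((β (k : ℤ) : ℝ) : ℂ)) := by
  simp [Qe, Ppoly]

lemma Qe_rec (α β : ℤ → ℝ) (k n : ℕ) (z : ℂ) :
    Qe α β k (n + 2) z = ((α ((n + 1 + k : ℕ) : ℤ) : ℝ) : ℂ)⁻¹ *
      ((z - ((β ((n + 1 + k : ℕ) : ℤ) : ℝ) : ℂ)) * Qe α β k (n + 1) z
        - ((α ((n + k : ℕ) : ℤ) : ℝ) : ℂ) * Qe α β k n z) := by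
  simp [Qe, Ppoly]

lemma prod_formula (α β : ℤ → ℝ) (hαpos : ∀ j, 0 < α j) (i : ℕ) (z : ℂ) : ∀ m : ℕ,
    prodDescC (fun j => transferMatrixC α β j z) i (m + 2) =
    !![(-(α ((i : ℤ) - 1) / α (i : ℤ)) : ℝ) * Qe α β (i + 1) m z,
        Qe α β i (m + 1) z;
       (-(α ((i : ℤ) - 1) / α (i : ℤ)) : ℝ) * Qe α β (i + 1) (m + 1) z,
        Qe α β i (m + 2) z] := by
  have hα : ∀ j : ℤ, (α j : ℂ) ≠ 0 := fun j => Complex.ofReal_ne_zero.mpr (hαpos j).ne'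
  intro m
  induction m with
  | zero =>
    show transferMatrixC α β ((i : ℤ) + ((1 : ℕ) : ℤ)) z *
      (transferMatrixC α β ((i : ℤ) + ((0 : ℕ) : ℤ)) z * 1) = _
    rw [mul_one]
    simp only [Nat.cast_one, Nat.cast_zero, add_zero, transferMatrixC]
    rw [Matrix.mul_fin_two]
    ext a b
    fin_cases a <;> fin_cases b
    all_goals simp [Qe_zero, Qe_one, Qe_rec]
    all_goals try (push_cast; ring_nf)
    all_goals try field_simp
    all_goals try ring
  | succ m ih =>
    show transferMatrixC α β ((i : ℤ) + ((m + 2 : ℕ) : ℤ)) z *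
      prodDescC (fun j => transferMatrixC α β j z) i (m + 2) = _
    rw [ih, transferMatrixC, Matrix.mul_fin_two]
    ext a b
    fin_cases a <;> fin_cases b
    all_goals simp [Qe_rec]
    all_goals try (push_cast; ring_nf)
    all_goals try field_simp
    all_goals try ring

-- analytic lemmas
lemma pow_diff_bound (r : ℝ) (hr : 0 ≤ r) :
    ∀ (n : ℕ) (x y : ℂ), ‖x‖ ≤ r → ‖y‖ ≤ r →
      ‖x ^ n - y ^ n‖ ≤ n * r ^ (n - 1) * ‖x - y‖ := by
  intro n
  induction n with
  | zero => intro x y _ _; simp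
  | succ n ih =>
    intro x y hx hy
    have key : x ^ (n + 1) - y ^ (n + 1) = x ^ n * (x - y) + y * (x ^ n - y ^ n) := by ring
    rw [key]
    have h1 : ‖x ^ n * (x - y)‖ ≤ r ^ n * ‖x - y‖ := by
      rw [norm_mul, norm_pow]
      exact mul_le_mul_of_nonneg_right (pow_le_pow_left₀ (norm_nonneg _) hx n) (norm_nonneg _)
    have h2 : ‖y * (x ^ n - y ^ n)‖ ≤ r * (n * r ^ (n - 1) * ‖x - y‖) := by
      rw [norm_mul]
      exact mul_le_mul hy (ih x y hx hy) (norm_nonneg _) hr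
    refine (norm_add_le _ _).trans ?_
    have h3 : r * (n * r ^ (n - 1) * ‖x - y‖) ≤ n * r ^ n * ‖x - y‖ := by
      rcases Nat.eq_zero_or_pos n with h | h
      · simp [h]
      · have : r * r ^ (n - 1) = r ^ n := by
          rw [← pow_succ']
          congr 1
          omega
        calc r * (n * r ^ (n - 1) * ‖x - y‖) = n * (r * r ^ (n - 1)) * ‖x - y‖ := by ring
          _ ≤ n * r ^ n * ‖x - y‖ := by rw [this]
    calc ‖x ^ n * (x - y)‖ + ‖y * (x ^ n - y ^ n)‖
        ≤ r ^ n * ‖x - y‖ + n * r ^ n * ‖x - y‖ := add_le_add h1 (h2.trans h3)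
      _ = (n + 1) * r ^ n * ‖x - y‖ := by ring
      _ = (n + 1 : ℕ) * r ^ (n + 1 - 1) * ‖x - y‖ := by push_cast; ring_nf

lemma poly_lip (p : Polynomial ℂ) (r : ℝ) (hr : 0 ≤ r) :
    ∃ L : ℝ, 0 ≤ L ∧ ∀ x y : ℂ, ‖x‖ ≤ r → ‖y‖ ≤ r →
      ‖p.eval x - p.eval y‖ ≤ L * ‖x - y‖ := by
  refine ⟨∑ n ∈ Finset.range (p.natDegree + 1), ‖p.coeff n‖ * (n * r ^ (n - 1)),
    Finset.sum_nonneg fun n _ => mul_nonneg (norm_nonneg _)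
      (mul_nonneg (Nat.cast_nonneg _) (pow_nonneg hr _)), ?_⟩
  intro x y hx hy
  rw [Polynomial.eval_eq_sum_range, Polynomial.eval_eq_sum_range, ← Finset.sum_sub_distrib]
  rw [Finset.sum_mul]
  refine (norm_sum_le _ _).trans (Finset.sum_le_sum fun n _ => ?_)
  rw [← mul_sub, norm_mul]
  calc ‖p.coeff n‖ * ‖x ^ n - y ^ n‖
      ≤ ‖p.coeff n‖ * (n * r ^ (n - 1) * ‖x - y‖) :=
        mul_le_mul_of_nonneg_left (pow_diff_bound r hr n x y hx hy) (norm_nonneg _)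
    _ = ‖p.coeff n‖ * (n * r ^ (n - 1)) * ‖x - y‖ := by ring

lemma eval_sub_eval_zero (p : Polynomial ℂ) (w : ℂ) :
    p.eval w - p.eval 0 = w * p.divX.eval w := by
  conv_lhs => rw [← Polynomial.divX_mul_X_add p]
  simp only [Polynomial.eval_add, Polynomial.eval_mul, Polynomial.eval_X, Polynomial.eval_C]
  ring

lemma divX_eval_zero (p : Polynomial ℂ) : p.divX.eval 0 = p.coeff 1 := by
  rw [← Polynomial.coeff_zero_eq_eval_zero, Polynomial.coeff_divX]

lemma bdd_inv (ahat : ℕ → ℝ)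
    (hlim : Filter.Tendsto ahat Filter.atTop Filter.atTop) :
    ∃ T : ℝ, 0 < T ∧ ∀ k, (ahat k)⁻¹ ≤ T := by
  have h0 : Filter.Tendsto (fun k => (ahat k)⁻¹) Filter.atTop (nhds 0) :=
    Filter.Tendsto.comp tendsto_inv_atTop_zero hlim
  obtain ⟨T₀, hT₀⟩ := h0.bddAbove_range
  exact ⟨max T₀ 1, lt_max_of_lt_right one_pos,
    fun k => le_trans (hT₀ ⟨k, rfl⟩) (le_max_left _ _)⟩

end helpers

theorem stmt11 (N : ℕ) (hN : 2 ≤ N)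
    (α β : ℤ → ℝ) (hαpos : ∀ j, 0 < α j)
    (hαper : ∀ j, α (j + N) = α j) (hβper : ∀ j, β (j + N) = β j)
    -- `W k n` is the orthonormal polynomial `w_n^{[k]}` associated with the shifted sequences
    (W : ℕ → ℕ → ℝ → ℝ)
    (hW0 : ∀ (k : ℕ) (x : ℝ), W k 0 x = 1)
    (hW1 : ∀ (k : ℕ) (x : ℝ), W k 1 x = (x - β k) / α k)
    (hWrec : ∀ k : ℕ, ∀ n : ℕ, 1 ≤ n → ∀ x : ℝ,
      α ((n : ℤ) + k - 1) * W k (n - 1) x + β ((n : ℤ) + k) * W k n x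
        + α ((n : ℤ) + k) * W k (n + 1) x = x * W k n x)
    (i : ℕ) (γ : ℝ)
    (hX0 : prodDescC (fun j => transferMatrixC α β j 0) i N
      = (γ : ℂ) • (1 : Matrix (Fin 2) (Fin 2) ℂ))
    (ahat : ℕ → ℝ) (hahat : ∀ k, 0 < ahat k)
    (hlim : Filter.Tendsto ahat Filter.atTop Filter.atTop)
    -- `Chat k z` is the matrix `Ĉ^i_k(z) = â_k (𝒳̂^i(z/â_k) − γ Id)`
    (Chat : ℕ → ℂ → Matrix (Fin 2) (Fin 2) ℂ)
    (hChat : ∀ (k : ℕ) (z : ℂ), Chat k z = (ahat k : ℂ) •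
      (prodDescC (fun j => transferMatrixC α β j (z / (ahat k : ℂ))) i N
        - (γ : ℂ) • (1 : Matrix (Fin 2) (Fin 2) ℂ)))
    -- `Climit z` is the matrix `𝒞̂^i(z)`
    (Climit : ℂ → Matrix (Fin 2) (Fin 2) ℂ)
    (hClimit : ∀ z : ℂ, Climit z = z •
      !![(-(α ((i : ℤ) - 1) / α (i : ℤ)) * deriv (W (i + 1) (N - 2)) 0 : ℝ),
          (deriv (W i (N - 1)) 0 : ℝ);
         (-(α ((i : ℤ) - 1) / α (i : ℤ)) * deriv (W (i + 1) (N - 1)) 0 : ℝ),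
          (deriv (W i N) 0 : ℝ)].map (Complex.ofReal)) :
    ∀ K : Set ℂ, IsCompact K →
      TendstoUniformlyOn (fun k z => Chat k z) Climit Filter.atTop K ∧
      ∃ c : ℝ, 0 < c ∧ ∀ k : ℕ, ∀ z ∈ K,
        ‖Chat (k + 1) z - Chat k z‖ ≤ c * |1 / ahat (k + 1) - 1 / ahat k| := by
  intro K hK
  obtain ⟨m, hNm⟩ : ∃ m, N = m + 2 := ⟨N - 2, by omega⟩
  have hα : ∀ j : ℤ, (α j : ℂ) ≠ 0 := fun j => Complex.ofReal_ne_zero.mpr (hαpos j).ne'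
  set c₀ : ℂ := ((-(α ((i : ℤ) - 1) / α (i : ℤ)) : ℝ) : ℂ) with hc₀
  set Qm : Matrix (Fin 2) (Fin 2) (Polynomial ℂ) :=
    !![Polynomial.C c₀ * (Ppoly α β (i + 1) m).map Complex.ofRealHom,
        (Ppoly α β i (m + 1)).map Complex.ofRealHom;
       Polynomial.C c₀ * (Ppoly α β (i + 1) (m + 1)).map Complex.ofRealHom,
        (Ppoly α β i (m + 2)).map Complex.ofRealHom] with hQm
  -- (F1) the transfer matrix product has polynomial entries
  have F1 : ∀ z : ℂ, prodDescC (fun j => transferMatrixC α β j z) i N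
      = Matrix.of (fun a b => (Qm a b).eval z) := by
    intro z
    rw [hNm, prod_formula α β hαpos i z m]
    ext a b
    fin_cases a <;> fin_cases b
    all_goals simp [hQm, Qe]
    all_goals try (rw [hc₀]; push_cast; ring)
  -- (F2) values at 0
  have F2 : ∀ a b : Fin 2, (Qm a b).eval 0 = (γ : ℂ) * (1 : Matrix (Fin 2) (Fin 2) ℂ) a b := by
    intro a b
    have h := (F1 0).symm.trans hX0
    have := congrFun (congrFun h a) b
    simpa [Matrix.smul_apply] using this
  -- (F3) Chat in terms of divX
  have F3 : ∀ (k : ℕ) (z : ℂ), Chat k z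
      = Matrix.of (fun a b => z * (Qm a b).divX.eval (z * (((ahat k)⁻¹ : ℝ) : ℂ))) := by
    intro k z
    have hak : ((ahat k : ℝ) : ℂ) ≠ 0 := Complex.ofReal_ne_zero.mpr (hahat k).ne'
    rw [hChat, F1]
    ext a b
    simp only [Matrix.smul_apply, Matrix.sub_apply, Matrix.of_apply, Matrix.smul_apply,
      smul_eq_mul]
    rw [← F2 a b, eval_sub_eval_zero, div_eq_mul_inv]
    push_cast
    field_simp
  -- deriv of W in terms of coefficients
  have hWc : ∀ k n : ℕ, deriv (W k n) 0 = (Ppoly α β k n).coeff 1 := by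
    intro k n
    rw [W_eq α β hαpos W hW0 hW1 hWrec k n, Polynomial.deriv,
      ← Polynomial.coeff_zero_eq_eval_zero, Polynomial.coeff_derivative]
    norm_num
  -- (F4) Climit in terms of divX at 0
  have F4 : ∀ z : ℂ, Climit z
      = Matrix.of (fun a b => z * (Qm a b).divX.eval (z * (((0 : ℝ) : ℝ) : ℂ))) := by
    intro z
    rw [hClimit]
    ext a b
    fin_cases a <;> fin_cases b
    all_goals simp [hQm, divX_eval_zero, Polynomial.coeff_C_mul, Polynomial.coeff_map, hWc, hNm,
        Matrix.smul_apply]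
    all_goals try (rw [hc₀]; push_cast; ring)
  -- bounds
  obtain ⟨T, hT, hTk⟩ := bdd_inv ahat hlim
  obtain ⟨R₀, hR₀⟩ := hK.isBounded.subset_closedBall (0 : ℂ)
  set R : ℝ := max R₀ 1 with hR
  have hR1 : (1 : ℝ) ≤ R := le_max_right _ _
  have hR0 : (0 : ℝ) ≤ R := le_trans zero_le_one hR1
  have hRz : ∀ z ∈ K, ‖z‖ ≤ R := by
    intro z hz
    have := hR₀ hz
    rw [Metric.mem_closedBall, dist_zero_right] at this
    exact this.trans (le_max_left _ _)
  have hRT : (0 : ℝ) ≤ R * T := mul_nonneg hR0 hT.le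
  choose L hL0 hLlip using fun a b : Fin 2 => poly_lip ((Qm a b).divX) (R * T) hRT
  set c : ℝ := (∑ a, ∑ b, R * L a b * R) + 1 with hc
  have hsum0 : (0 : ℝ) ≤ ∑ a, ∑ b, R * L a b * R :=
    Finset.sum_nonneg fun a _ => Finset.sum_nonneg fun b _ =>
      mul_nonneg (mul_nonneg hR0 (hL0 a b)) hR0
  have hcpos : 0 < c := by rw [hc]; linarith
  -- master Lipschitz estimate
  have master : ∀ z ∈ K, ∀ t t' : ℝ, |t| ≤ T → |t'| ≤ T →
      ‖(Matrix.of fun a b => z * (Qm a b).divX.eval (z * ((t : ℝ) : ℂ)))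
        - (Matrix.of fun a b => z * (Qm a b).divX.eval (z * ((t' : ℝ) : ℂ)))‖
        ≤ c * |t - t'| := by
    intro z hz t t' ht ht'
    have hz' : ‖z‖ ≤ R := hRz z hz
    have hmem : ∀ s : ℝ, |s| ≤ T → ‖z * (s : ℂ)‖ ≤ R * T := by
      intro s hs
      rw [norm_mul, Complex.norm_real]
      exact mul_le_mul hz' hs (abs_nonneg _) hR0
    have hentry : ∀ a b : Fin 2,
        ‖((Matrix.of fun a b => z * (Qm a b).divX.eval (z * ((t : ℝ) : ℂ)))
          - (Matrix.of fun a b => z * (Qm a b).divX.eval (z * ((t' : ℝ) : ℂ)))) a b‖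
          ≤ R * L a b * R * |t - t'| := by
      intro a b
      rw [Matrix.sub_apply, Matrix.of_apply, Matrix.of_apply, ← mul_sub, norm_mul]
      have h1 : ‖(Qm a b).divX.eval (z * ((t : ℝ) : ℂ)) - (Qm a b).divX.eval (z * ((t' : ℝ) : ℂ))‖
          ≤ L a b * (‖z‖ * |t - t'|) := by
        have := hLlip a b (z * ((t : ℝ) : ℂ)) (z * ((t' : ℝ) : ℂ)) (hmem t ht) (hmem t' ht')
        refine this.trans (le_of_eq ?_)
        rw [← mul_sub, norm_mul]
        congr 1
        rw [← Complex.ofReal_sub, Complex.norm_real, Real.norm_eq_abs]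
      calc ‖z‖ * ‖(Qm a b).divX.eval (z * ((t : ℝ) : ℂ)) - (Qm a b).divX.eval (z * ((t' : ℝ) : ℂ))‖
          ≤ ‖z‖ * (L a b * (‖z‖ * |t - t'|)) :=
            mul_le_mul_of_nonneg_left h1 (norm_nonneg _)
        _ = ‖z‖ * L a b * ‖z‖ * |t - t'| := by ring
        _ ≤ R * L a b * R * |t - t'| := by
            have : ‖z‖ * L a b * ‖z‖ ≤ R * L a b * R := by
              have e1 : ‖z‖ * L a b * ‖z‖ = L a b * (‖z‖ * ‖z‖) := by ring
              have e2 : R * L a b * R = L a b * (R * R) := by ring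
              rw [e1, e2]
              exact mul_le_mul_of_nonneg_left
                (mul_le_mul hz' hz' (norm_nonneg _) hR0) (hL0 a b)
            exact mul_le_mul_of_nonneg_right this (abs_nonneg _)
    refine (matrix_norm_le_sum _).trans ?_
    calc ∑ a, ∑ b, ‖((Matrix.of fun a b => z * (Qm a b).divX.eval (z * ((t : ℝ) : ℂ)))
          - (Matrix.of fun a b => z * (Qm a b).divX.eval (z * ((t' : ℝ) : ℂ)))) a b‖
        ≤ ∑ a, ∑ b, R * L a b * R * |t - t'| :=
          Finset.sum_le_sum fun a _ => Finset.sum_le_sum fun b _ => hentry a b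
      _ = (∑ a, ∑ b, R * L a b * R) * |t - t'| := by
          rw [Finset.sum_mul]
          exact Finset.sum_congr rfl fun a _ => (Finset.sum_mul _ _ _).symm
      _ ≤ c * |t - t'| := by
          apply mul_le_mul_of_nonneg_right _ (abs_nonneg _)
          rw [hc]; linarith
  constructor
  · -- uniform convergence
    rw [Metric.tendstoUniformlyOn_iff]
    intro ε hε
    have h0 : Filter.Tendsto (fun k => c * (ahat k)⁻¹) Filter.atTop (nhds 0) := by
      have h1 : Filter.Tendsto (fun k => (ahat k)⁻¹) Filter.atTop (nhds 0) :=
        Filter.Tendsto.comp tendsto_inv_atTop_zero hlim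
      have := h1.const_mul c
      simpa using this
    filter_upwards [h0.eventually_lt_const hε] with k hk
    intro z hz
    rw [dist_eq_norm]
    show ‖Climit z - Chat k z‖ < ε
    rw [F4 z, F3 k z]
    have hm := master z hz 0 ((ahat k)⁻¹) (by simpa using hT.le)
      (by rw [abs_of_nonneg (inv_nonneg.mpr (hahat k).le)]; exact hTk k)
    have he : |(0 : ℝ) - (ahat k)⁻¹| = (ahat k)⁻¹ := by
      rw [zero_sub, abs_neg, abs_of_nonneg (inv_nonneg.mpr (hahat k).le)]
    rw [he] at hm
    exact lt_of_le_of_lt hm hk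
  · -- Lipschitz bound
    refine ⟨c, hcpos, ?_⟩
    intro k z hz
    rw [F3 (k + 1) z, F3 k z, one_div, one_div]
    exact master z hz ((ahat (k + 1))⁻¹) ((ahat k)⁻¹)
      (by rw [abs_of_nonneg (inv_nonneg.mpr (hahat (k + 1)).le)]; exact hTk (k + 1))
      (by rw [abs_of_nonneg (inv_nonneg.mpr (hahat k).le)]; exact hTk k)
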